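/- arXiv:2301.09526 — 4 statements merged into one kernel-verified Lean document; each statement's English description precedes it below -/
import Mathlib

section
/- For every constant c > 0 there exists a polynomial F in two complex variables z₁, z₂ such that ‖(z₁ ∂/∂z₁)² F‖_{A(D²)} ≤ 1 and ‖(z₂ ∂/∂z₂)² F‖_{A(D²)} ≤ 1, but ‖z₂ ∂/∂z₂ (z₁ ∂/∂z₁) F‖_{A(D²)} ≥ c, where (z₁ ∂/∂z₁)G denotes the function (z₁,z₂) ↦ z₁ · ∂G/∂z₁(z₁,z₂), similarly for z₂, and ‖G‖_{A(D²)} denotes the supremum of |G| over the closed unit bi-disc {(z₁,z₂) ∈ ℂ² : |z₁| ≤ 1, |z₂| ≤ 1}. -/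
open MvPolynomial

/-- The sup norm of (the evaluation of) a polynomial over the closed unit bi-disc. -/
noncomputable def ADnorm (G : MvPolynomial (Fin 2) ℂ) : ℝ :=
  sSup ((fun z : ℂ × ℂ => ‖MvPolynomial.eval ![z.1, z.2] G‖) ''
    {z : ℂ × ℂ | ‖z.1‖ ≤ 1 ∧ ‖z.2‖ ≤ 1})

/-- The Euler derivative `z₁ ∂/∂z₁` acting on polynomials. -/
noncomputable def euler1 (G : MvPolynomial (Fin 2) ℂ) : MvPolynomial (Fin 2) ℂ :=
  X 0 * pderiv 0 G

/-- The Euler derivative `z₂ ∂/∂z₂` acting on polynomials. -/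
noncomputable def euler2 (G : MvPolynomial (Fin 2) ℂ) : MvPolynomial (Fin 2) ℂ :=
  X 1 * pderiv 1 G

namespace Stmt1Aux
open Finset

/-- sign pattern : `+1` on `[0,L)`, `-1` on `[L,2L)`. -/
noncomputable def eps (L j : ℕ) : ℂ := if j < L then 1 else -1

/-- the basic one-variable weighted sums -/
noncomputable def S (L m : ℕ) (z : ℂ) : ℂ :=
  ∑ j ∈ range (2 * L), eps L j * (j : ℂ) ^ m * z ^ j

/-- a block polynomial with Euler weights `p`, `q`. -/
noncomputable def blk (s p q : ℕ) : MvPolynomial (Fin 2) ℂ :=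
  ∑ j ∈ range (2 * 2 ^ s), ∑ k ∈ range (2 * 2 ^ s),
    C ((16 : ℂ)⁻¹ ^ s * (eps (2 ^ s) j * (j : ℂ) ^ p) * (eps (2 ^ s) k * (k : ℂ) ^ q))
      * X 0 ^ j * X 1 ^ k

lemma euler1_mono (a : ℂ) (j k : ℕ) :
    euler1 (C a * X 0 ^ j * X 1 ^ k) = C (a * j) * X 0 ^ j * X 1 ^ k := by
  unfold euler1
  cases j with
  | zero => simp [pderiv_mul, pderiv_pow, pderiv_X]
  | succ n =>
      simp [pderiv_mul, pderiv_pow, pderiv_X, Pi.single_eq_same]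
      ring

lemma euler2_mono (a : ℂ) (j k : ℕ) :
    euler2 (C a * X 0 ^ j * X 1 ^ k) = C (a * k) * X 0 ^ j * X 1 ^ k := by
  unfold euler2
  cases k with
  | zero => simp [pderiv_mul, pderiv_pow, pderiv_X]
  | succ n =>
      simp [pderiv_mul, pderiv_pow, pderiv_X, Pi.single_eq_same]
      ring

lemma euler1_sum {ι : Type*} (t : Finset ι) (f : ι → MvPolynomial (Fin 2) ℂ) :
    euler1 (∑ i ∈ t, f i) = ∑ i ∈ t, euler1 (f i) := by
  unfold euler1; rw [map_sum, Finset.mul_sum]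

lemma euler2_sum {ι : Type*} (t : Finset ι) (f : ι → MvPolynomial (Fin 2) ℂ) :
    euler2 (∑ i ∈ t, f i) = ∑ i ∈ t, euler2 (f i) := by
  unfold euler2; rw [map_sum, Finset.mul_sum]

lemma euler1_blk (s p q : ℕ) : euler1 (blk s p q) = blk s (p + 1) q := by
  unfold blk
  rw [euler1_sum]
  refine Finset.sum_congr rfl fun j _ => ?_
  rw [euler1_sum]
  refine Finset.sum_congr rfl fun k _ => ?_
  rw [euler1_mono]
  ring_nf

lemma euler2_blk (s p q : ℕ) : euler2 (blk s p q) = blk s p (q + 1) := by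
  unfold blk
  rw [euler2_sum]
  refine Finset.sum_congr rfl fun j _ => ?_
  rw [euler2_sum]
  refine Finset.sum_congr rfl fun k _ => ?_
  rw [euler2_mono]
  ring_nf

lemma eval_mono (a : ℂ) (j k : ℕ) (z w : ℂ) :
    MvPolynomial.eval ![z, w] (C a * X 0 ^ j * X 1 ^ k) = a * z ^ j * w ^ k := by
  simp

lemma eval_blk (s p q : ℕ) (z w : ℂ) :
    MvPolynomial.eval ![z, w] (blk s p q)
      = (16 : ℂ)⁻¹ ^ s * S (2 ^ s) p z * S (2 ^ s) q w := by
  unfold blk S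
  rw [map_sum]
  simp only [map_sum, eval_mono]
  rw [mul_assoc, Finset.sum_mul_sum, Finset.mul_sum]
  refine Finset.sum_congr rfl fun j _ => ?_
  rw [Finset.mul_sum]
  refine Finset.sum_congr rfl fun k _ => ?_
  ring


lemma S_split (L m : ℕ) (z : ℂ) :
    S L m z = ∑ j ∈ range L, (j : ℂ) ^ m * z ^ j
      - ∑ j ∈ range L, ((L + j : ℕ) : ℂ) ^ m * z ^ (L + j) := by
  unfold S
  rw [two_mul, Finset.sum_range_add]
  have h1 : ∀ j ∈ range L, eps L j * (j : ℂ) ^ m * z ^ j = (j : ℂ) ^ m * z ^ j := by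
    intro j hj; rw [eps, if_pos (mem_range.mp hj)]; ring
  have h2 : ∀ j ∈ range L,
      eps L (L + j) * ((L + j : ℕ) : ℂ) ^ m * z ^ (L + j)
        = -(((L + j : ℕ) : ℂ) ^ m * z ^ (L + j)) := by
    intro j hj; rw [eps, if_neg (by omega)]; ring
  rw [Finset.sum_congr rfl h1, Finset.sum_congr rfl h2, Finset.sum_neg_distrib, sub_eq_add_neg]

lemma S0_eq (L : ℕ) (z : ℂ) : S L 0 z = (1 - z ^ L) * ∑ j ∈ range L, z ^ j := by
  rw [S_split]
  simp only [pow_zero, one_mul, pow_add]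
  rw [← Finset.mul_sum, sub_mul, one_mul]

lemma S1_one (L : ℕ) : S L 1 1 = -((L : ℂ)) ^ 2 := by
  rw [S_split, ← Finset.sum_sub_distrib]
  have h : ∀ j ∈ range L,
      ((j : ℂ) ^ 1 * (1:ℂ) ^ j - ((L + j : ℕ) : ℂ) ^ 1 * (1:ℂ) ^ (L + j)) = -(L : ℂ) := by
    intro j hj; push_cast; ring
  rw [Finset.sum_congr rfl h, Finset.sum_const, card_range, nsmul_eq_mul]
  ring

lemma abs_eps (L j : ℕ) : ‖eps L j‖ = 1 := by
  unfold eps; split_ifs <;> simp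

lemma abs_geom_le (L : ℕ) {z : ℂ} (hz : ‖z‖ ≤ 1) :
    ‖∑ j ∈ range L, z ^ j‖ ≤ L := by
  calc ‖∑ j ∈ range L, z ^ j‖ ≤ ∑ j ∈ range L, ‖z ^ j‖ :=
        norm_sum_le _ _
    _ ≤ ∑ j ∈ range L, 1 := by
        refine Finset.sum_le_sum fun j _ => ?_
        rw [norm_pow]; exact pow_le_one₀ (norm_nonneg z) hz
    _ = L := by simp

lemma geom_mul (L : ℕ) (z : ℂ) : (∑ j ∈ range L, z ^ j) * (1 - z) = 1 - z ^ L := by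
  have := geom_sum_mul z L
  calc (∑ j ∈ range L, z ^ j) * (1 - z) = -((∑ j ∈ range L, z ^ j) * (z - 1)) := by ring
    _ = 1 - z ^ L := by rw [this]; ring

lemma abs_one_sub_pow_le (L : ℕ) {z : ℂ} (hz : ‖z‖ ≤ 1) :
    ‖1 - z ^ L‖ ≤ L * ‖1 - z‖ := by
  rw [← geom_mul, norm_mul]
  exact mul_le_mul_of_nonneg_right (abs_geom_le L hz) (norm_nonneg _)

lemma abs_one_sub_pow_le_two (L : ℕ) {z : ℂ} (hz : ‖z‖ ≤ 1) :
    ‖1 - z ^ L‖ ≤ 2 := by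
  calc ‖1 - z ^ L‖ ≤ ‖(1:ℂ)‖ + ‖z ^ L‖ := by
        simpa [sub_eq_add_neg] using norm_add_le (1:ℂ) (-(z ^ L))
    _ ≤ 1 + 1 := by
        rw [norm_one, norm_pow]
        exact add_le_add_right (pow_le_one₀ (norm_nonneg z) hz) 1
    _ = 2 := by norm_num

lemma S0_near (L : ℕ) {z : ℂ} (hz : ‖z‖ ≤ 1) :
    ‖S L 0 z‖ ≤ (L : ℝ) ^ 2 * ‖1 - z‖ := by
  rw [S0_eq, norm_mul]
  calc ‖1 - z ^ L‖ * ‖∑ j ∈ range L, z ^ j‖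
      ≤ (L * ‖1 - z‖) * L := by
        exact mul_le_mul (abs_one_sub_pow_le L hz) (abs_geom_le L hz)
          (norm_nonneg _) (by positivity)
    _ = (L : ℝ) ^ 2 * ‖1 - z‖ := by ring

lemma S0_far (L : ℕ) {z : ℂ} (hz : ‖z‖ ≤ 1) :
    ‖S L 0 z‖ * ‖1 - z‖ ≤ 4 := by
  have key : S L 0 z * (1 - z) = (1 - z ^ L) ^ 2 := by
    rw [S0_eq, mul_assoc, geom_mul]; ring
  calc ‖S L 0 z‖ * ‖1 - z‖ = ‖S L 0 z * (1 - z)‖ := by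
        rw [norm_mul]
    _ = ‖1 - z ^ L‖ ^ 2 := by rw [key, norm_pow]
    _ ≤ 2 ^ 2 := by
        have := abs_one_sub_pow_le_two L hz
        exact pow_le_pow_left₀ (norm_nonneg _) this 2
    _ = 4 := by norm_num

lemma S2_crude (L : ℕ) {z : ℂ} (hz : ‖z‖ ≤ 1) :
    ‖S L 2 z‖ ≤ 8 * (L : ℝ) ^ 3 := by
  calc ‖S L 2 z‖
      ≤ ∑ j ∈ range (2 * L), ‖eps L j * (j : ℂ) ^ 2 * z ^ j‖ :=
        norm_sum_le _ _
    _ ≤ ∑ j ∈ range (2 * L), (2 * (L : ℝ)) ^ 2 := by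
        refine Finset.sum_le_sum fun j hj => ?_
        rw [norm_mul, norm_mul, abs_eps, one_mul, norm_pow, norm_pow, Complex.norm_natCast]
        have hj2 : (j : ℝ) ≤ 2 * L := by
          exact_mod_cast (mem_range.mp hj).le
        calc (j : ℝ) ^ 2 * ‖z‖ ^ j ≤ (j : ℝ) ^ 2 * 1 := by
              refine mul_le_mul_of_nonneg_left ?_ (by positivity)
              exact pow_le_one₀ (norm_nonneg z) hz
          _ ≤ (2 * (L : ℝ)) ^ 2 := by
              rw [mul_one]
              exact pow_le_pow_left₀ (by positivity) hj2 2
    _ = 8 * (L : ℝ) ^ 3 := by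
        rw [Finset.sum_const, card_range, nsmul_eq_mul]
        push_cast; ring


lemma sum_min_le (N : ℕ) {r : ℝ} (hr : 0 ≤ r) :
    ∑ s ∈ range N, min ((2 : ℝ) ^ s * r) (((2 : ℝ) ^ s * r)⁻¹) ≤ 4 := by
  rcases eq_or_lt_of_le hr with h0 | hpos
  · simp [← h0]
  classical
  have hsplit := Finset.sum_filter_add_sum_filter_not (range N)
    (fun s => (2 : ℝ) ^ s * r ≤ 1)
    (fun s => min ((2 : ℝ) ^ s * r) (((2 : ℝ) ^ s * r)⁻¹))
  rw [← hsplit]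
  have hA : ∑ s ∈ (range N).filter (fun s => (2 : ℝ) ^ s * r ≤ 1),
      min ((2 : ℝ) ^ s * r) (((2 : ℝ) ^ s * r)⁻¹) ≤ 2 := by
    by_cases hT : ((range N).filter (fun s => (2 : ℝ) ^ s * r ≤ 1)).Nonempty
    · set T := (range N).filter (fun s => (2 : ℝ) ^ s * r ≤ 1) with hTdef
      set M := T.max' hT with hM
      have hMmem : M ∈ T := T.max'_mem hT
      have hMle : (2 : ℝ) ^ M * r ≤ 1 := (Finset.mem_filter.mp hMmem).2
      calc ∑ s ∈ T, min ((2 : ℝ) ^ s * r) (((2 : ℝ) ^ s * r)⁻¹)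
          ≤ ∑ s ∈ T, (2 : ℝ) ^ s * r := by
            exact Finset.sum_le_sum fun s _ => min_le_left _ _
        _ ≤ ∑ s ∈ range (M + 1), (2 : ℝ) ^ s * r := by
            refine Finset.sum_le_sum_of_subset_of_nonneg ?_ (fun s _ _ => by positivity)
            intro s hs
            exact mem_range.mpr (Nat.lt_succ_of_le (T.le_max' s hs))
        _ = ((2 : ℝ) ^ (M + 1) - 1) / (2 - 1) * r := by
            rw [← Finset.sum_mul, geom_sum_eq (by norm_num : (2:ℝ) ≠ 1)]
        _ ≤ 2 * ((2 : ℝ) ^ M * r) := by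
            rw [pow_succ]
            nlinarith [pow_pos (by norm_num : (0:ℝ) < 2) M]
        _ ≤ 2 := by nlinarith
    · rw [Finset.not_nonempty_iff_eq_empty.mp hT]
      norm_num
  have hB : ∑ s ∈ (range N).filter (fun s => ¬ ((2 : ℝ) ^ s * r ≤ 1)),
      min ((2 : ℝ) ^ s * r) (((2 : ℝ) ^ s * r)⁻¹) ≤ 2 := by
    by_cases hT : ((range N).filter (fun s => ¬ ((2 : ℝ) ^ s * r ≤ 1))).Nonempty
    · set T := (range N).filter (fun s => ¬ ((2 : ℝ) ^ s * r ≤ 1)) with hTdef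
      set m := T.min' hT with hm
      have hmmem : m ∈ T := T.min'_mem hT
      have hmgt : 1 < (2 : ℝ) ^ m * r := by
        have := (Finset.mem_filter.mp hmmem).2
        exact lt_of_not_ge this
      calc ∑ s ∈ T, min ((2 : ℝ) ^ s * r) (((2 : ℝ) ^ s * r)⁻¹)
          ≤ ∑ s ∈ T, ((1 : ℝ) / 2) ^ (s - m) := by
            refine Finset.sum_le_sum fun s hs => ?_
            refine le_trans (min_le_right _ _) ?_
            have hsm : m ≤ s := T.min'_le s hs
            have hpow : (2 : ℝ) ^ s = (2 : ℝ) ^ (s - m) * (2 : ℝ) ^ m := by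
              rw [← pow_add]; congr 1; omega
            have h1 : (1 : ℝ) ≤ (2 : ℝ) ^ (s - m) := one_le_pow₀ (by norm_num)
            have hlt : (2 : ℝ) ^ (s - m) ≤ (2 : ℝ) ^ s * r := by
              rw [hpow, mul_assoc]
              nlinarith
            have hpos2 : (0 : ℝ) < (2 : ℝ) ^ (s - m) := by positivity
            have := inv_anti₀ hpos2 hlt
            calc ((2 : ℝ) ^ s * r)⁻¹ ≤ ((2 : ℝ) ^ (s - m))⁻¹ := this
              _ = ((1 : ℝ) / 2) ^ (s - m) := by
                  rw [one_div, inv_pow]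
        _ ≤ ∑ s ∈ Ico m N, ((1 : ℝ) / 2) ^ (s - m) := by
            refine Finset.sum_le_sum_of_subset_of_nonneg ?_ (fun s _ _ => by positivity)
            intro s hs
            have := Finset.mem_filter.mp hs
            exact Finset.mem_Ico.mpr ⟨T.min'_le s hs, mem_range.mp this.1⟩
        _ = ∑ d ∈ range (N - m), ((1 : ℝ) / 2) ^ d := by
            rw [Finset.sum_Ico_eq_sum_range]
            exact Finset.sum_congr rfl fun d _ => by congr 1; omega
        _ ≤ 2 := sum_geometric_two_le _
    · rw [Finset.not_nonempty_iff_eq_empty.mp hT]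
      norm_num
  linarith


lemma term_bound (s : ℕ) {z w : ℂ} (hz : ‖z‖ ≤ 1) (hw : ‖w‖ ≤ 1) :
    ‖(16 : ℂ)⁻¹ ^ s * S (2 ^ s) 2 z * S (2 ^ s) 0 w‖
      ≤ 32 * min ((2 : ℝ) ^ s * ‖1 - w‖)
          (((2 : ℝ) ^ s * ‖1 - w‖)⁻¹) := by
  set r := ‖1 - w‖ with hrdef
  have hr : 0 ≤ r := norm_nonneg _
  have habs : ‖(16 : ℂ)⁻¹ ^ s * S (2 ^ s) 2 z * S (2 ^ s) 0 w‖
      = (16 : ℝ)⁻¹ ^ s * ‖S (2 ^ s) 2 z‖ * ‖S (2 ^ s) 0 w‖ := by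
    rw [norm_mul, norm_mul, norm_pow, norm_inv]
    norm_num
  have hL2 : ‖S (2 ^ s) 2 z‖ ≤ 8 * ((2 : ℝ) ^ s) ^ 3 := by
    have := S2_crude (2 ^ s) hz
    push_cast at this ⊢
    convert this using 3 <;> norm_num
  have h2s : ((2 : ℝ) ^ s) ≠ 0 := by positivity
  have hpow16 : ((16 : ℝ)⁻¹) ^ s * (8 * ((2 : ℝ) ^ s) ^ 3) = 8 * ((2 : ℝ) ^ s)⁻¹ := by
    have h16s : (16 : ℝ) ^ s = ((2 : ℝ) ^ s) ^ 4 := by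
      rw [show (16 : ℝ) = 2 ^ 4 by norm_num, ← pow_mul, ← pow_mul, mul_comm]
    rw [inv_pow, h16s]
    field_simp
  rw [mul_min_of_nonneg _ _ (by norm_num : (0:ℝ) ≤ 32)]
  refine le_min ?_ ?_
  · -- near bound
    have hS0 : ‖S (2 ^ s) 0 w‖ ≤ ((2 : ℝ) ^ s) ^ 2 * r := by
      have := S0_near (2 ^ s) hw
      push_cast at this
      exact this
    rw [habs]
    calc (16 : ℝ)⁻¹ ^ s * ‖S (2 ^ s) 2 z‖ * ‖S (2 ^ s) 0 w‖
        ≤ (16 : ℝ)⁻¹ ^ s * (8 * ((2 : ℝ) ^ s) ^ 3) * (((2 : ℝ) ^ s) ^ 2 * r) := by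
          refine mul_le_mul (mul_le_mul_of_nonneg_left hL2 (by positivity)) hS0
            (norm_nonneg _) (by positivity)
      _ = 8 * ((2 : ℝ) ^ s)⁻¹ * (((2 : ℝ) ^ s) ^ 2 * r) := by rw [hpow16]
      _ = 8 * ((2 : ℝ) ^ s * r) * (((2 : ℝ) ^ s) * ((2 : ℝ) ^ s)⁻¹) := by ring
      _ = 8 * ((2 : ℝ) ^ s * r) := by
          rw [mul_inv_cancel₀ (by positivity : ((2:ℝ)^s) ≠ 0), mul_one]
      _ ≤ 32 * ((2 : ℝ) ^ s * r) := by nlinarith [mul_nonneg (pow_nonneg (by norm_num : (0:ℝ) ≤ 2) s) hr]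
  · -- far bound
    rcases eq_or_lt_of_le hr with h0 | hrpos
    · -- w = 1, S0 = 0
      have hw1 : (1 : ℂ) - w = 0 := by
        have := norm_eq_zero.mp h0.symm
        exact this
      have hw1' : w = 1 := by
        have := sub_eq_zero.mp hw1
        exact this.symm
      have : S (2 ^ s) 0 w = 0 := by
        rw [hw1', S0_eq]
        simp
      rw [habs, this]
      simp
      positivity
    · have hS0 : ‖S (2 ^ s) 0 w‖ ≤ 4 / r := by
        rw [le_div_iff₀ hrpos]
        exact S0_far (2 ^ s) hw
      rw [habs]
      calc (16 : ℝ)⁻¹ ^ s * ‖S (2 ^ s) 2 z‖ * ‖S (2 ^ s) 0 w‖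
          ≤ (16 : ℝ)⁻¹ ^ s * (8 * ((2 : ℝ) ^ s) ^ 3) * (4 / r) := by
            refine mul_le_mul (mul_le_mul_of_nonneg_left hL2 (by positivity)) hS0
              (norm_nonneg _) (by positivity)
        _ = 8 * ((2 : ℝ) ^ s)⁻¹ * (4 / r) := by rw [hpow16]
        _ = 32 * ((2 : ℝ) ^ s * r)⁻¹ := by
            rw [mul_inv]
            field_simp
            ring
        _ ≤ 32 * ((2 : ℝ) ^ s * r)⁻¹ := le_refl _

lemma key_bound (N : ℕ) {z w : ℂ} (hz : ‖z‖ ≤ 1) (hw : ‖w‖ ≤ 1) :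
    ‖∑ s ∈ range N, (16 : ℂ)⁻¹ ^ s * S (2 ^ s) 2 z * S (2 ^ s) 0 w‖ ≤ 128 := by
  set r := ‖1 - w‖ with hrdef
  calc ‖∑ s ∈ range N, (16 : ℂ)⁻¹ ^ s * S (2 ^ s) 2 z * S (2 ^ s) 0 w‖
      ≤ ∑ s ∈ range N, ‖(16 : ℂ)⁻¹ ^ s * S (2 ^ s) 2 z * S (2 ^ s) 0 w‖ :=
        norm_sum_le _ _
    _ ≤ ∑ s ∈ range N, 32 * min ((2 : ℝ) ^ s * r) (((2 : ℝ) ^ s * r)⁻¹) :=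
        Finset.sum_le_sum fun s _ => term_bound s hz hw
    _ = 32 * ∑ s ∈ range N, min ((2 : ℝ) ^ s * r) (((2 : ℝ) ^ s * r)⁻¹) := by
        rw [Finset.mul_sum]
    _ ≤ 32 * 4 := by
        have := sum_min_le N (norm_nonneg (1 - w))
        nlinarith
    _ = 128 := by norm_num


lemma euler1_C_mul (a : ℂ) (p : MvPolynomial (Fin 2) ℂ) :
    euler1 (C a * p) = C a * euler1 p := by
  unfold euler1; rw [pderiv_C_mul]; ring

lemma euler2_C_mul (a : ℂ) (p : MvPolynomial (Fin 2) ℂ) :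
    euler2 (C a * p) = C a * euler2 p := by
  unfold euler2; rw [pderiv_C_mul]; ring

lemma bddAbove_AD (G : MvPolynomial (Fin 2) ℂ) :
    BddAbove ((fun z : ℂ × ℂ => ‖MvPolynomial.eval ![z.1, z.2] G‖) ''
      {z : ℂ × ℂ | ‖z.1‖ ≤ 1 ∧ ‖z.2‖ ≤ 1}) := by
  refine ⟨∑ d ∈ G.support, ‖MvPolynomial.coeff d G‖, ?_⟩
  rintro x ⟨⟨z, w⟩, ⟨hz, hw⟩, rfl⟩
  simp only
  rw [MvPolynomial.eval_eq]
  calc ‖∑ d ∈ G.support, MvPolynomial.coeff d G * ∏ i ∈ d.support, ![z, w] i ^ d i‖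
      ≤ ∑ d ∈ G.support, ‖MvPolynomial.coeff d G * ∏ i ∈ d.support, ![z, w] i ^ d i‖ :=
        norm_sum_le _ _
    _ ≤ ∑ d ∈ G.support, ‖MvPolynomial.coeff d G‖ := by
        refine Finset.sum_le_sum fun d _ => ?_
        rw [norm_mul]
        have hprod : ‖∏ i ∈ d.support, ![z, w] i ^ d i‖ ≤ 1 := by
          rw [norm_prod]
          refine Finset.prod_le_one (fun i _ => norm_nonneg _) (fun i _ => ?_)
          rw [norm_pow]
          refine pow_le_one₀ (norm_nonneg _) ?_
          fin_cases i <;> simpa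
        nlinarith [norm_nonneg (MvPolynomial.coeff d G),
          norm_nonneg (∏ i ∈ d.support, ![z, w] i ^ d i)]

lemma ADnorm_le {G : MvPolynomial (Fin 2) ℂ} {B : ℝ} (hB : 0 ≤ B)
    (h : ∀ z w : ℂ, ‖z‖ ≤ 1 → ‖w‖ ≤ 1 →
      ‖MvPolynomial.eval ![z, w] G‖ ≤ B) : ADnorm G ≤ B := by
  refine Real.sSup_le ?_ hB
  rintro x ⟨⟨z, w⟩, ⟨hz, hw⟩, rfl⟩
  exact h z w hz hw

lemma ADnorm_ge_one_one (G : MvPolynomial (Fin 2) ℂ) :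
    ‖MvPolynomial.eval ![1, 1] G‖ ≤ ADnorm G := by
  refine le_csSup (bddAbove_AD G) ?_
  exact ⟨((1 : ℂ), (1 : ℂ)), by norm_num, rfl⟩

/-- full polynomial -/
noncomputable def Fpoly (N : ℕ) : MvPolynomial (Fin 2) ℂ := ∑ s ∈ range N, blk s 0 0

lemma mixed_eval_one (N : ℕ) :
    MvPolynomial.eval ![1, 1] (euler2 (euler1 (Fpoly N))) = (N : ℂ) := by
  unfold Fpoly
  rw [euler1_sum]
  simp only [euler1_blk, Nat.reduceAdd]
  rw [euler2_sum]
  simp only [euler2_blk, Nat.reduceAdd]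
  rw [map_sum]
  simp only [eval_blk]
  have hterm : ∀ s : ℕ, (16 : ℂ)⁻¹ ^ s * S (2 ^ s) 1 1 * S (2 ^ s) 1 1 = 1 := by
    intro s
    rw [S1_one]
    have hc : ((2 ^ s : ℕ) : ℂ) = (2 : ℂ) ^ s := by push_cast; ring
    rw [hc]
    have h16 : (16 : ℂ) ^ s = ((2 : ℂ) ^ s) ^ 4 := by
      rw [show (16 : ℂ) = 2 ^ 4 by norm_num, ← pow_mul, ← pow_mul, mul_comm]
    have h2s : ((2 : ℂ) ^ s) ≠ 0 := pow_ne_zero _ (by norm_num)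
    rw [inv_pow, h16]
    field_simp
  rw [Finset.sum_congr rfl fun s _ => hterm s, Finset.sum_const, card_range, nsmul_eq_mul, mul_one]

lemma pure1_eval (N : ℕ) (z w : ℂ) :
    MvPolynomial.eval ![z, w] (euler1 (euler1 (Fpoly N)))
      = ∑ s ∈ range N, (16 : ℂ)⁻¹ ^ s * S (2 ^ s) 2 z * S (2 ^ s) 0 w := by
  unfold Fpoly
  rw [euler1_sum]
  simp only [euler1_blk, Nat.reduceAdd]
  rw [euler1_sum]
  simp only [euler1_blk, Nat.reduceAdd]
  rw [map_sum]
  simp only [eval_blk]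

lemma pure2_eval (N : ℕ) (z w : ℂ) :
    MvPolynomial.eval ![z, w] (euler2 (euler2 (Fpoly N)))
      = ∑ s ∈ range N, (16 : ℂ)⁻¹ ^ s * S (2 ^ s) 2 w * S (2 ^ s) 0 z := by
  unfold Fpoly
  rw [euler2_sum]
  simp only [euler2_blk, Nat.reduceAdd]
  rw [euler2_sum]
  simp only [euler2_blk, Nat.reduceAdd]
  rw [map_sum]
  simp only [eval_blk]
  exact Finset.sum_congr rfl fun s _ => by ring

end Stmt1Aux

/-- For every `c > 0` there is a polynomial `F` in two complex variables with
`‖(z₁∂₁)²F‖_{A(D²)} ≤ 1`, `‖(z₂∂₂)²F‖_{A(D²)} ≤ 1` but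
`‖z₂∂₂(z₁∂₁)F‖_{A(D²)} ≥ c`. -/
theorem stmt_1 :
    ∀ c : ℝ, 0 < c →
      ∃ F : MvPolynomial (Fin 2) ℂ,
        ADnorm (euler1 (euler1 F)) ≤ 1 ∧
        ADnorm (euler2 (euler2 F)) ≤ 1 ∧
        c ≤ ADnorm (euler2 (euler1 F)) := by

  intro c hc
  classical
  set N : ℕ := ⌈128 * c⌉₊ with hN
  refine ⟨C ((128 : ℂ)⁻¹) * Stmt1Aux.Fpoly N, ?_, ?_, ?_⟩
  · refine Stmt1Aux.ADnorm_le (by norm_num) fun z w hz hw => ?_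
    rw [Stmt1Aux.euler1_C_mul, Stmt1Aux.euler1_C_mul, map_mul, eval_C, norm_mul, norm_inv]
    rw [Stmt1Aux.pure1_eval]
    have := Stmt1Aux.key_bound N hz hw
    have h128 : ‖(128 : ℂ)‖ = 128 := by norm_num
    rw [h128]
    calc (128 : ℝ)⁻¹ * ‖∑ s ∈ Finset.range N, (16 : ℂ)⁻¹ ^ s
          * Stmt1Aux.S (2 ^ s) 2 z * Stmt1Aux.S (2 ^ s) 0 w‖
        ≤ (128 : ℝ)⁻¹ * 128 := by
          refine mul_le_mul_of_nonneg_left this (by norm_num)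
      _ = 1 := by norm_num
  · refine Stmt1Aux.ADnorm_le (by norm_num) fun z w hz hw => ?_
    rw [Stmt1Aux.euler2_C_mul, Stmt1Aux.euler2_C_mul, map_mul, eval_C, norm_mul, norm_inv]
    rw [Stmt1Aux.pure2_eval]
    have := Stmt1Aux.key_bound N hw hz
    have h128 : ‖(128 : ℂ)‖ = 128 := by norm_num
    rw [h128]
    calc (128 : ℝ)⁻¹ * ‖∑ s ∈ Finset.range N, (16 : ℂ)⁻¹ ^ s
          * Stmt1Aux.S (2 ^ s) 2 w * Stmt1Aux.S (2 ^ s) 0 z‖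
        ≤ (128 : ℝ)⁻¹ * 128 := by
          refine mul_le_mul_of_nonneg_left this (by norm_num)
      _ = 1 := by norm_num
  · have hval : ‖MvPolynomial.eval ![1, 1]
        (euler2 (euler1 (C ((128 : ℂ)⁻¹) * Stmt1Aux.Fpoly N)))‖ = (128 : ℝ)⁻¹ * N := by
      rw [Stmt1Aux.euler1_C_mul, Stmt1Aux.euler2_C_mul, map_mul, eval_C,
        Stmt1Aux.mixed_eval_one, norm_mul, norm_inv]
      norm_num
    calc c = (128 : ℝ)⁻¹ * (128 * c) := by ring
      _ ≤ (128 : ℝ)⁻¹ * N := by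
          refine mul_le_mul_of_nonneg_left ?_ (by norm_num)
          exact Nat.le_ceil _
      _ = ‖MvPolynomial.eval ![1, 1]
            (euler2 (euler1 (C ((128 : ℂ)⁻¹) * Stmt1Aux.Fpoly N)))‖ := hval.symm
      _ ≤ ADnorm (euler2 (euler1 (C ((128 : ℂ)⁻¹) * Stmt1Aux.Fpoly N))) :=
          Stmt1Aux.ADnorm_ge_one_one _
end

section
/- Let n₀, n₁, …, n_N ∈ ℕ² and let a₀, a₁, …, a_N be complex numbers. Define functions on the distinguished boundary {(z₁,z₂) ∈ ℂ² : |z₁| = |z₂| = 1} by p₀(z) = a₀ z^{n₀}, q₀(z) = 1, and recursively p_k(z) = p_{k−1}(z) + a_k z^{n_k} q_{k−1}(z^{−1}), q_k(z) = q_{k−1}(z) − conj(a_k) z^{n_k} p_{k−1}(z^{−1}), where z^{n} = z₁^{n_1} z₂^{n_2} and z^{−1} = (z₁^{−1}, z₂^{−1}). Then for every z with |z₁| = |z₂| = 1, |p_N(z)|² + |q_N(z̄)|² = Π_{k=0}^{N} (1 + |a_k|²), where z̄ = (conj(z₁), conj(z₂)). -/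
open scoped ComplexConjugate

lemma key_rs (A B a w : ℂ) (hw : w * conj w = 1) :
    Complex.normSq (A + a * w * B) + Complex.normSq (B - conj a * conj w * A)
      = (1 + Complex.normSq a) * (Complex.normSq A + Complex.normSq B) := by
  have hC : (A + a * w * B) * conj (A + a * w * B)
      + (B - conj a * conj w * A) * conj (B - conj a * conj w * A)
      = (1 + a * conj a) * (A * conj A + B * conj B) := by
    simp only [map_add, map_sub, map_mul, Complex.conj_conj]
    linear_combination (a * conj a * (A * conj A + B * conj B)) * hw
  rw [Complex.mul_conj, Complex.mul_conj, Complex.mul_conj, Complex.mul_conj,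
    Complex.mul_conj] at hC
  exact_mod_cast hC

/-- Rudin–Shapiro identity on the two–dimensional torus: if `p_k`, `q_k` are the
Rudin–Shapiro type functions built from frequencies `n_k ∈ ℕ²` and scalars `a_k`, then for
`|z₁| = |z₂| = 1` one has `|p_N(z)|² + |q_N(z̄)|² = ∏_{k=0}^{N} (1 + |a_k|²)`. -/
theorem stmt_6 (N : ℕ) (n : ℕ → ℕ × ℕ) (a : ℕ → ℂ)
    (p q : ℕ → ℂ → ℂ → ℂ)
    (hp0 : ∀ z₁ z₂ : ℂ, ‖z₁‖ = 1 → ‖z₂‖ = 1 →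
      p 0 z₁ z₂ = a 0 * z₁ ^ (n 0).1 * z₂ ^ (n 0).2)
    (hq0 : ∀ z₁ z₂ : ℂ, ‖z₁‖ = 1 → ‖z₂‖ = 1 → q 0 z₁ z₂ = 1)
    (hp : ∀ k : ℕ, ∀ z₁ z₂ : ℂ, ‖z₁‖ = 1 → ‖z₂‖ = 1 →
      p (k + 1) z₁ z₂ =
        p k z₁ z₂ + a (k + 1) * z₁ ^ (n (k + 1)).1 * z₂ ^ (n (k + 1)).2 * q k z₁⁻¹ z₂⁻¹)
    (hq : ∀ k : ℕ, ∀ z₁ z₂ : ℂ, ‖z₁‖ = 1 → ‖z₂‖ = 1 →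
      q (k + 1) z₁ z₂ =
        q k z₁ z₂ - conj (a (k + 1)) * z₁ ^ (n (k + 1)).1 * z₂ ^ (n (k + 1)).2 * p k z₁⁻¹ z₂⁻¹) :
    ∀ z₁ z₂ : ℂ, ‖z₁‖ = 1 → ‖z₂‖ = 1 →
      ‖p N z₁ z₂‖ ^ 2 + ‖q N (conj z₁) (conj z₂)‖ ^ 2 =
        ∏ k ∈ Finset.range (N + 1), (1 + ‖a k‖ ^ 2) := by
  induction N with
  | zero =>
    intro z₁ z₂ h₁ h₂
    rw [hp0 z₁ z₂ h₁ h₂, hq0 (conj z₁) (conj z₂) (by simp [h₁]) (by simp [h₂])]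
    simp [map_mul, map_pow, h₁, h₂]
    ring
  | succ N ih =>
    intro z₁ z₂ h₁ h₂
    have h₁' : ‖conj z₁‖ = 1 := by simp [h₁]
    have h₂' : ‖conj z₂‖ = 1 := by simp [h₂]
    have hi1 : z₁⁻¹ = conj z₁ := Complex.inv_eq_conj h₁
    have hi2 : z₂⁻¹ = conj z₂ := Complex.inv_eq_conj h₂
    have hi1' : (conj z₁)⁻¹ = z₁ := by rw [Complex.inv_eq_conj h₁', Complex.conj_conj]
    have hi2' : (conj z₂)⁻¹ = z₂ := by rw [Complex.inv_eq_conj h₂', Complex.conj_conj]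
    rw [hp N z₁ z₂ h₁ h₂, hq N (conj z₁) (conj z₂) h₁' h₂', hi1, hi2, hi1', hi2']
    set w : ℂ := z₁ ^ (n (N + 1)).1 * z₂ ^ (n (N + 1)).2 with hwdef
    have hw : w * conj w = 1 := by
      rw [Complex.mul_conj]
      norm_cast
      simp [hwdef, Complex.normSq_mul, map_pow,
        ← Complex.sq_norm, h₁, h₂]
    have hkey := key_rs (p N z₁ z₂) (q N (conj z₁) (conj z₂)) (a (N + 1)) w hw
    have hgoal : a (N + 1) * z₁ ^ (n (N + 1)).1 * z₂ ^ (n (N + 1)).2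
        * q N (conj z₁) (conj z₂) = a (N + 1) * w * q N (conj z₁) (conj z₂) := by
      rw [hwdef]; ring
    have hgoal2 : conj (a (N + 1)) * (conj z₁) ^ (n (N + 1)).1 * (conj z₂) ^ (n (N + 1)).2
        * p N z₁ z₂ = conj (a (N + 1)) * conj w * p N z₁ z₂ := by
      simp only [hwdef, map_mul, map_pow]; ring
    rw [hgoal, hgoal2, Finset.prod_range_succ, ← ih z₁ z₂ h₁ h₂]
    simp only [Complex.sq_norm] at hkey ⊢
    rw [hkey]; ring
end

section
/- There do not exist finite complex Borel measures μ and ν on the torus T^2 such that for every pair of nonnegative integers (n,m) ≠ (0,0), n·m = n² · μ̂(n,m) + m² · ν̂(n,m), where μ̂(n,m) = ∫_{T²} e^{−i(nx+my)} dμ(x,y) is the Fourier coefficient of μ. -/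
open MeasureTheory Real

/-- The two-dimensional torus `(ℝ/2πℤ)²`. -/
abbrev T2 : Type := AddCircle (2 * π) × AddCircle (2 * π)

/-- The `(n,m)`-th Fourier coefficient `∫ e^{-i(nx+my)} dμ` of the finite complex Borel
measure `μ = μ₁ - μ₂ + i(μ₃ - μ₄)` given through its decomposition into four finite
(nonnegative) measures. -/
noncomputable def cFourierCoef (μ₁ μ₂ μ₃ μ₄ : Measure T2) (n m : ℤ) : ℂ :=
  (∫ z, (fourier (-n) z.1 : ℂ) * (fourier (-m) z.2 : ℂ) ∂μ₁) -
  (∫ z, (fourier (-n) z.1 : ℂ) * (fourier (-m) z.2 : ℂ) ∂μ₂) +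
  Complex.I * ((∫ z, (fourier (-n) z.1 : ℂ) * (fourier (-m) z.2 : ℂ) ∂μ₃) -
    (∫ z, (fourier (-n) z.1 : ℂ) * (fourier (-m) z.2 : ℂ) ∂μ₄))

namespace Stmt8Aux

open Filter Topology Complex

local instance : Fact (0 < 2 * π) := ⟨by positivity⟩

/-- The character `e^{-i(px+qy)}` on the torus. -/
noncomputable def w (p q : ℕ) (z : T2) : ℂ :=
  (fourier (-(p : ℤ)) z.1 : ℂ) * (fourier (-(q : ℤ)) z.2 : ℂ)

/-- The "line" `{px + qy ∈ 2πℤ}`. -/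
def L (p q : ℕ) : Set T2 := {z | w p q z = 1}

/-- The set where `px+qy ∈ 2πℚ`. -/
def Q (u v : ℕ) : Set T2 := {z | ∃ b : ℕ, 0 < b ∧ w u v z ^ b = 1}

/-- The set of points both of whose coordinates are rational multiples of `2π`. -/
def R : Set T2 := {z | (∃ n : ℕ, 0 < n ∧ (fourier (-1 : ℤ) z.1 : ℂ) ^ n = 1) ∧
    (∃ m : ℕ, 0 < m ∧ (fourier (-1 : ℤ) z.2 : ℂ) ^ m = 1)}

/-- The complex measure of a set for `μ = μ₁ - μ₂ + i(μ₃ - μ₄)`. -/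
noncomputable def cS (μ₁ μ₂ μ₃ μ₄ : Measure T2) (E : Set T2) : ℂ :=
  (((μ₁ E).toReal : ℂ) - ((μ₂ E).toReal : ℂ)) +
    Complex.I * (((μ₃ E).toReal : ℂ) - ((μ₄ E).toReal : ℂ))

lemma fourier_nat_mul {T : ℝ} (k : ℕ) (n : ℤ) (x : AddCircle T) :
    (fourier ((k : ℤ) * n) x : ℂ) = (fourier n x : ℂ) ^ k := by
  induction k with
  | zero => simp
  | succ k ih =>
      have : ((k : ℤ) + 1) * n = (k : ℤ) * n + n := by ring
      push_cast
      rw [this, fourier_add, ih, pow_succ]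

lemma norm_fourier {T : ℝ} [hT : Fact (0 < T)] (n : ℤ) (x : AddCircle T) :
    ‖(fourier n x : ℂ)‖ = 1 := by
  rw [fourier_apply, Circle.norm_coe]

lemma fourier_ne_zero {T : ℝ} [hT : Fact (0 < T)] (n : ℤ) (x : AddCircle T) :
    (fourier n x : ℂ) ≠ 0 := by
  intro h
  have := norm_fourier n x
  rw [h] at this
  simp at this

lemma w_continuous (p q : ℕ) : Continuous (w p q) :=
  ((map_continuous (fourier (-(p : ℤ)))).comp continuous_fst).mul
    ((map_continuous (fourier (-(q : ℤ)))).comp continuous_snd)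

lemma norm_w (p q : ℕ) (z : T2) : ‖w p q z‖ = 1 := by
  rw [w, norm_mul, norm_fourier, norm_fourier, one_mul]

lemma w_ne_zero (p q : ℕ) (z : T2) : w p q z ≠ 0 := by
  intro h
  have := norm_w p q z
  rw [h] at this
  simp at this

lemma w_mul (k p q : ℕ) (z : T2) : w (k * p) (k * q) z = w p q z ^ k := by
  rw [w, w, mul_pow, ← fourier_nat_mul, ← fourier_nat_mul]
  congr 2 <;> push_cast <;> ring

lemma w_eq_pow (u v : ℕ) (z : T2) :
    w u v z = (fourier (-1 : ℤ) z.1 : ℂ) ^ u * (fourier (-1 : ℤ) z.2 : ℂ) ^ v := by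
  rw [w, ← fourier_nat_mul, ← fourier_nat_mul]
  congr 2 <;> push_cast <;> ring

lemma measurableSet_L (p q : ℕ) : MeasurableSet (L p q) :=
  ((isClosed_singleton (x := (1 : ℂ))).preimage (w_continuous p q)).measurableSet

lemma measurableSet_Q (u v : ℕ) : MeasurableSet (Q u v) := by
  have : Q u v = ⋃ b : ℕ, {z | 0 < b} ∩ {z : T2 | w u v z ^ b = 1} := by
    ext z
    simp [Q, Set.mem_iUnion, Set.mem_inter_iff, Set.mem_setOf_eq]
  rw [this]
  refine MeasurableSet.iUnion fun b => (MeasurableSet.const _).inter ?_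
  exact ((isClosed_singleton (x := (1 : ℂ))).preimage ((w_continuous u v).pow _)).measurableSet

lemma measurableSet_R : MeasurableSet R := by
  have : R = (⋃ n : ℕ, {z | 0 < n} ∩ {z : T2 | (fourier (-1 : ℤ) z.1 : ℂ) ^ n = 1}) ∩
      (⋃ m : ℕ, {z | 0 < m} ∩ {z : T2 | (fourier (-1 : ℤ) z.2 : ℂ) ^ m = 1}) := by
    ext z
    simp [R, Set.mem_iUnion, Set.mem_inter_iff, Set.mem_setOf_eq]
  rw [this]
  refine MeasurableSet.inter ?_ ?_ <;>
    refine MeasurableSet.iUnion fun n => (MeasurableSet.const _).inter ?_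
  · exact ((isClosed_singleton (x := (1 : ℂ))).preimage
      (((map_continuous (fourier (-1 : ℤ))).comp continuous_fst).pow _)).measurableSet
  · exact ((isClosed_singleton (x := (1 : ℂ))).preimage
      (((map_continuous (fourier (-1 : ℤ))).comp continuous_snd).pow _)).measurableSet

lemma R_subset_Q (u v : ℕ) : R ⊆ Q u v := by
  rintro z ⟨⟨n, hn, h1⟩, ⟨m, hm, h2⟩⟩
  refine ⟨n * m, Nat.mul_pos hn hm, ?_⟩
  rw [w_eq_pow, mul_pow, ← pow_mul, ← pow_mul]
  calc (fourier (-1 : ℤ) z.1 : ℂ) ^ (u * (n * m)) * (fourier (-1 : ℤ) z.2 : ℂ) ^ (v * (n * m))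
      = ((fourier (-1 : ℤ) z.1 : ℂ) ^ n) ^ (u * m) * ((fourier (-1 : ℤ) z.2 : ℂ) ^ m) ^ (v * n) := by
        rw [← pow_mul, ← pow_mul]; ring_nf
    _ = 1 := by rw [h1, h2]; simp

lemma root_helper {a : ℂ} (ha : a ≠ 0) {e₁ e₂ : ℕ} (hlt : e₂ < e₁) (h : a ^ e₁ = a ^ e₂) :
    a ^ (e₁ - e₂) = 1 := by
  have h2 : a ^ e₂ * a ^ (e₁ - e₂) = a ^ e₂ * 1 := by
    rw [mul_one, ← pow_add, Nat.add_sub_cancel' hlt.le, h]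
  exact mul_left_cancel₀ (pow_ne_zero _ ha) h2

lemma Q_disjoint {u v u' v' : ℕ} (h : u' * v < u * v') : Disjoint (Q u v \ R) (Q u' v' \ R) := by
  rw [Set.disjoint_left]
  rintro z ⟨hz1, hzR⟩ ⟨hz2, _⟩
  apply hzR
  obtain ⟨β, hβ, h1⟩ := hz1
  obtain ⟨β', hβ', h2⟩ := hz2
  rw [w_eq_pow] at h1 h2
  set a := (fourier (-1 : ℤ) z.1 : ℂ) with ha_def
  set b := (fourier (-1 : ℤ) z.2 : ℂ) with hb_def
  have ha : a ≠ 0 := fourier_ne_zero _ _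
  have hb : b ≠ 0 := fourier_ne_zero _ _
  -- raise h1 to power β'*v', h2 to power β*v  (to extract a-relation)
  have H1 : ∀ c d : ℕ, a ^ (u * (β * c)) * b ^ (v * (β * c)) = 1 := by
    intro c d
    have := congrArg (· ^ c) h1
    simpa [← pow_mul, mul_pow, mul_comm, mul_left_comm, mul_assoc] using this
  have H2 : ∀ c : ℕ, a ^ (u' * (β' * c)) * b ^ (v' * (β' * c)) = 1 := by
    intro c
    have := congrArg (· ^ c) h2
    simpa [← pow_mul, mul_pow, mul_comm, mul_left_comm, mul_assoc] using this
  constructor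
  · -- a is a root of unity
    have e1 : a ^ (u * (β * (β' * v'))) * b ^ (v * (β * (β' * v'))) = 1 := H1 _ 0
    have e2 : a ^ (u' * (β' * (β * v))) * b ^ (v' * (β' * (β * v))) = 1 := H2 _
    have hbexp : v * (β * (β' * v')) = v' * (β' * (β * v)) := by ring
    rw [hbexp] at e1
    have e3 : a ^ (u * (β * (β' * v'))) = a ^ (u' * (β' * (β * v))) :=
      mul_right_cancel₀ (pow_ne_zero _ hb) (e1.trans e2.symm)
    have hlt : u' * (β' * (β * v)) < u * (β * (β' * v')) := by
      have h1' : u' * (β' * (β * v)) = (u' * v) * (β * β') := by ring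
      have h2' : u * (β * (β' * v')) = (u * v') * (β * β') := by ring
      rw [h1', h2']
      exact (Nat.mul_lt_mul_right (Nat.mul_pos hβ hβ')).mpr h
    exact ⟨_, Nat.sub_pos_of_lt hlt, root_helper ha hlt e3⟩
  · -- b is a root of unity
    have e1 : a ^ (u * (β * (β' * u'))) * b ^ (v * (β * (β' * u'))) = 1 := H1 _ 0
    have e2 : a ^ (u' * (β' * (β * u))) * b ^ (v' * (β' * (β * u))) = 1 := H2 _
    have haexp : u * (β * (β' * u')) = u' * (β' * (β * u)) := by ring
    rw [haexp] at e1
    have e3 : b ^ (v' * (β' * (β * u))) = b ^ (v * (β * (β' * u'))) :=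
      mul_left_cancel₀ (pow_ne_zero _ ha) (e2.trans e1.symm)
    have hlt : v * (β * (β' * u')) < v' * (β' * (β * u)) := by
      have h1' : v * (β * (β' * u')) = (u' * v) * (β * β') := by ring
      have h2' : v' * (β' * (β * u)) = (u * v') * (β * β') := by ring
      rw [h1', h2']
      exact (Nat.mul_lt_mul_right (Nat.mul_pos hβ hβ')).mpr h
    exact ⟨_, Nat.sub_pos_of_lt hlt, root_helper hb hlt e3⟩

lemma integrable_w_pow (lam : Measure T2) [IsFiniteMeasure lam] (p q k : ℕ) :
    Integrable (fun z => w p q z ^ k) lam := by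
  refine Integrable.mono' (integrable_const (1 : ℝ)) ?_ ?_
  · exact ((w_continuous p q).pow k).aestronglyMeasurable
  · exact Filter.Eventually.of_forall fun z => by
      rw [norm_pow, norm_w, one_pow]

lemma avg_tendsto (lam : Measure T2) [IsFiniteMeasure lam] (p q : ℕ) :
    Tendsto (fun N : ℕ => (N : ℂ)⁻¹ * ∑ k ∈ Finset.range N, ∫ z, w p q z ^ (k + 1) ∂lam)
      atTop (𝓝 (((lam (L p q)).toReal : ℂ))) := by
  have hmain : Tendsto
      (fun N : ℕ => ∫ z, (N : ℂ)⁻¹ * ∑ k ∈ Finset.range N, w p q z ^ (k + 1) ∂lam)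
      atTop (𝓝 (∫ z, Set.indicator (L p q) (fun _ => (1 : ℂ)) z ∂lam)) := by
    refine tendsto_integral_of_dominated_convergence (fun _ => (1 : ℝ)) ?_ ?_ ?_ ?_
    · intro N
      exact (continuous_const.mul (continuous_finset_sum _
        fun k _ => (w_continuous p q).pow (k + 1))).aestronglyMeasurable
    · exact integrable_const _
    · intro N
      refine Filter.Eventually.of_forall fun z => ?_
      rw [norm_mul, norm_inv, Complex.norm_natCast]
      rcases Nat.eq_zero_or_pos N with hN | hN
      · simp [hN]
      · have hb : ‖∑ k ∈ Finset.range N, w p q z ^ (k + 1)‖ ≤ (N : ℝ) := by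
          calc ‖∑ k ∈ Finset.range N, w p q z ^ (k + 1)‖
              ≤ ∑ k ∈ Finset.range N, ‖w p q z ^ (k + 1)‖ := norm_sum_le _ _
            _ = ∑ k ∈ Finset.range N, 1 := by
                refine Finset.sum_congr rfl fun k _ => by rw [norm_pow, norm_w, one_pow]
            _ = (N : ℝ) := by simp
        have hNpos : (0 : ℝ) < (N : ℝ) := by exact_mod_cast hN
        calc ((N : ℝ))⁻¹ * ‖∑ k ∈ Finset.range N, w p q z ^ (k + 1)‖
            ≤ ((N : ℝ))⁻¹ * (N : ℝ) := by
              exact mul_le_mul_of_nonneg_left hb (by positivity)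
          _ = 1 := inv_mul_cancel₀ hNpos.ne'
    · refine Filter.Eventually.of_forall fun z => ?_
      by_cases hz : w p q z = 1
      · have : ∀ N : ℕ, 1 ≤ N → (N : ℂ)⁻¹ * ∑ k ∈ Finset.range N, w p q z ^ (k + 1) = 1 := by
          intro N hN
          have : ∑ k ∈ Finset.range N, w p q z ^ (k + 1) = (N : ℂ) := by
            rw [Finset.sum_congr rfl fun k _ => by rw [hz, one_pow]]
            simp
          rw [this, inv_mul_cancel₀]
          exact_mod_cast Nat.one_le_iff_ne_zero.mp hN
        have hind : Set.indicator (L p q) (fun _ => (1 : ℂ)) z = 1 :=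
          Set.indicator_of_mem (show z ∈ L p q from hz) _
        rw [hind]
        refine Tendsto.congr' ?_ tendsto_const_nhds
        filter_upwards [eventually_ge_atTop 1] with N hN
        exact (this N hN).symm
      · have hind : Set.indicator (L p q) (fun _ => (1 : ℂ)) z = 0 :=
          Set.indicator_of_notMem (show z ∉ L p q by simpa [L, Set.mem_setOf_eq] using hz) _
        rw [hind]
        rw [tendsto_zero_iff_norm_tendsto_zero]
        have hbound : ∀ N : ℕ, ‖(N : ℂ)⁻¹ * ∑ k ∈ Finset.range N, w p q z ^ (k + 1)‖
            ≤ (N : ℝ)⁻¹ * (2 / ‖w p q z - 1‖) := by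
          intro N
          rw [norm_mul, norm_inv, Complex.norm_natCast]
          refine mul_le_mul_of_nonneg_left ?_ (by positivity)
          have hgeom : ∑ k ∈ Finset.range N, w p q z ^ (k + 1)
              = w p q z * ((w p q z ^ N - 1) / (w p q z - 1)) := by
            rw [← geom_sum_eq hz]
            rw [Finset.mul_sum]
            refine Finset.sum_congr rfl fun k _ => by rw [pow_succ']
          rw [hgeom, norm_mul, norm_w, one_mul, norm_div]
          gcongr
          calc ‖w p q z ^ N - 1‖ ≤ ‖w p q z ^ N‖ + ‖(1 : ℂ)‖ := norm_sub_le _ _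
            _ = 2 := by rw [norm_pow, norm_w, one_pow, norm_one]; norm_num
        refine squeeze_zero (fun N => norm_nonneg _) hbound ?_
        have := (tendsto_inv_atTop_nhds_zero_nat (𝕜 := ℝ)).mul_const (2 / ‖w p q z - 1‖)
        simpa using this
  have heq : ∀ N : ℕ,
      (∫ z, (N : ℂ)⁻¹ * ∑ k ∈ Finset.range N, w p q z ^ (k + 1) ∂lam)
        = (N : ℂ)⁻¹ * ∑ k ∈ Finset.range N, ∫ z, w p q z ^ (k + 1) ∂lam := by
    intro N
    rw [MeasureTheory.integral_const_mul]
    congr 1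
    exact integral_finset_sum _ fun k _ => integrable_w_pow lam p q (k + 1)
  have hval : (∫ z, Set.indicator (L p q) (fun _ => (1 : ℂ)) z ∂lam)
      = ((lam (L p q)).toReal : ℂ) := by
    rw [integral_indicator_const (1 : ℂ) (measurableSet_L p q)]
    simp [Complex.real_smul]
    rfl
  rw [← hval]
  exact hmain.congr heq

lemma L_factorial_eq (J u v : ℕ) :
    L (J.factorial * u) (J.factorial * v) = {z | w u v z ^ J.factorial = 1} := by
  ext z; simp [L, w_mul]

lemma tendsto_L_factorial (lam : Measure T2) [IsFiniteMeasure lam] (u v : ℕ) :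
    Tendsto (fun J : ℕ => (lam (L (J.factorial * u) (J.factorial * v))).toReal)
      atTop (𝓝 ((lam (Q u v)).toReal)) := by
  have hmono : Monotone fun J : ℕ => {z : T2 | w u v z ^ J.factorial = 1} := by
    refine monotone_nat_of_le_succ fun J z hz => ?_
    have hz' : w u v z ^ J.factorial = 1 := hz
    show w u v z ^ (J + 1).factorial = 1
    rw [Nat.factorial_succ, mul_comm, pow_mul, hz', one_pow]
  have hunion : (⋃ J : ℕ, {z : T2 | w u v z ^ J.factorial = 1}) = Q u v := by
    ext z
    simp only [Set.mem_iUnion, Set.mem_setOf_eq, Q]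
    constructor
    · rintro ⟨J, hJ⟩
      exact ⟨J.factorial, J.factorial_pos, hJ⟩
    · rintro ⟨b, hb, hbz⟩
      refine ⟨b, ?_⟩
      obtain ⟨c, hc⟩ := Nat.dvd_factorial hb le_rfl
      rw [hc, pow_mul, hbz, one_pow]
  have h1 : Tendsto (fun J : ℕ => lam {z : T2 | w u v z ^ J.factorial = 1}) atTop
      (𝓝 (lam (Q u v))) := by
    rw [← hunion]
    exact tendsto_measure_iUnion_atTop hmono
  have h2 := (ENNReal.tendsto_toReal (measure_ne_top lam (Q u v))).comp h1
  refine h2.congr fun J => ?_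
  rw [Function.comp_apply, L_factorial_eq]

lemma tendsto_measure_disjoint_zero (lam : Measure T2) [IsFiniteMeasure lam]
    (s : ℕ → Set T2) (hmeas : ∀ k, MeasurableSet (s k))
    (hdisj : Pairwise (Function.onFun Disjoint s)) :
    Tendsto (fun k => (lam (s k)).toReal) atTop (𝓝 0) := by
  have hts : ∑' k, lam (s k) ≠ ⊤ := by
    rw [← measure_iUnion hdisj hmeas]
    exact measure_ne_top lam _
  have h1 := ENNReal.tendsto_atTop_zero_of_tsum_ne_top hts
  have h2 := (ENNReal.tendsto_toReal (by simp : (0 : ENNReal) ≠ ⊤)).comp h1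
  exact h2


lemma cS_tendsto {μ₁ μ₂ μ₃ μ₄ : Measure T2} (s : ℕ → Set T2) (S : Set T2)
    (h₁ : Tendsto (fun k => (μ₁ (s k)).toReal) atTop (𝓝 ((μ₁ S).toReal)))
    (h₂ : Tendsto (fun k => (μ₂ (s k)).toReal) atTop (𝓝 ((μ₂ S).toReal)))
    (h₃ : Tendsto (fun k => (μ₃ (s k)).toReal) atTop (𝓝 ((μ₃ S).toReal)))
    (h₄ : Tendsto (fun k => (μ₄ (s k)).toReal) atTop (𝓝 ((μ₄ S).toReal))) :
    Tendsto (fun k => cS μ₁ μ₂ μ₃ μ₄ (s k)) atTop (𝓝 (cS μ₁ μ₂ μ₃ μ₄ S)) := by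
  have c₁ := (Complex.continuous_ofReal.tendsto _).comp h₁
  have c₂ := (Complex.continuous_ofReal.tendsto _).comp h₂
  have c₃ := (Complex.continuous_ofReal.tendsto _).comp h₃
  have c₄ := (Complex.continuous_ofReal.tendsto _).comp h₄
  exact (c₁.sub c₂).add (tendsto_const_nhds.mul (c₃.sub c₄))

lemma avg_tendsto_c (μ₁ μ₂ μ₃ μ₄ : Measure T2) [IsFiniteMeasure μ₁] [IsFiniteMeasure μ₂]
    [IsFiniteMeasure μ₃] [IsFiniteMeasure μ₄] (p q : ℕ) :
    Tendsto (fun N : ℕ => (N : ℂ)⁻¹ * ∑ k ∈ Finset.range N,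
        cFourierCoef μ₁ μ₂ μ₃ μ₄ (((k + 1) * p : ℕ) : ℤ) (((k + 1) * q : ℕ) : ℤ))
      atTop (𝓝 (cS μ₁ μ₂ μ₃ μ₄ (L p q))) := by
  have hcoef : ∀ (lam : Measure T2) (k : ℕ),
      (∫ z, (fourier (-(((k + 1) * p : ℕ) : ℤ)) z.1 : ℂ) *
        (fourier (-(((k + 1) * q : ℕ) : ℤ)) z.2 : ℂ) ∂lam)
        = ∫ z, w p q z ^ (k + 1) ∂lam := by
    intro lam k
    refine integral_congr_ae (Filter.Eventually.of_forall fun z => ?_)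
    show (fourier (-(((k + 1) * p : ℕ) : ℤ)) z.1 : ℂ) *
        (fourier (-(((k + 1) * q : ℕ) : ℤ)) z.2 : ℂ) = w p q z ^ (k + 1)
    rw [← w_mul]
    rfl
  have key : ∀ N : ℕ, (N : ℂ)⁻¹ * ∑ k ∈ Finset.range N,
      cFourierCoef μ₁ μ₂ μ₃ μ₄ (((k + 1) * p : ℕ) : ℤ) (((k + 1) * q : ℕ) : ℤ)
      = ((N : ℂ)⁻¹ * ∑ k ∈ Finset.range N, ∫ z, w p q z ^ (k + 1) ∂μ₁)
        - ((N : ℂ)⁻¹ * ∑ k ∈ Finset.range N, ∫ z, w p q z ^ (k + 1) ∂μ₂)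
        + Complex.I * (((N : ℂ)⁻¹ * ∑ k ∈ Finset.range N, ∫ z, w p q z ^ (k + 1) ∂μ₃)
          - ((N : ℂ)⁻¹ * ∑ k ∈ Finset.range N, ∫ z, w p q z ^ (k + 1) ∂μ₄)) := by
    intro N
    simp only [cFourierCoef, hcoef]
    rw [Finset.sum_add_distrib, Finset.sum_sub_distrib, ← Finset.mul_sum,
      Finset.sum_sub_distrib]
    ring
  have T₁ := avg_tendsto μ₁ p q
  have T₂ := avg_tendsto μ₂ p q
  have T₃ := avg_tendsto μ₃ p q
  have T₄ := avg_tendsto μ₄ p q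
  have := ((T₁.sub T₂).add (tendsto_const_nhds.mul (T₃.sub T₄))).congr
    (fun N => (key N).symm)
  exact this


lemma cS_tendsto_zero {μ₁ μ₂ μ₃ μ₄ : Measure T2} (s : ℕ → Set T2)
    (h₁ : Tendsto (fun k => (μ₁ (s k)).toReal) atTop (𝓝 0))
    (h₂ : Tendsto (fun k => (μ₂ (s k)).toReal) atTop (𝓝 0))
    (h₃ : Tendsto (fun k => (μ₃ (s k)).toReal) atTop (𝓝 0))
    (h₄ : Tendsto (fun k => (μ₄ (s k)).toReal) atTop (𝓝 0)) :
    Tendsto (fun k => cS μ₁ μ₂ μ₃ μ₄ (s k)) atTop (𝓝 0) := by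
  have c₁ := (Complex.continuous_ofReal.tendsto _).comp h₁
  have c₂ := (Complex.continuous_ofReal.tendsto _).comp h₂
  have c₃ := (Complex.continuous_ofReal.tendsto _).comp h₃
  have c₄ := (Complex.continuous_ofReal.tendsto _).comp h₄
  have := (c₁.sub c₂).add ((tendsto_const_nhds (x := Complex.I)).mul (c₃.sub c₄))
  simpa [cS] using this

lemma cS_decomp (μ₁ μ₂ μ₃ μ₄ : Measure T2) [IsFiniteMeasure μ₁] [IsFiniteMeasure μ₂]
    [IsFiniteMeasure μ₃] [IsFiniteMeasure μ₄] (u v : ℕ) :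
    cS μ₁ μ₂ μ₃ μ₄ (Q u v) = cS μ₁ μ₂ μ₃ μ₄ R + cS μ₁ μ₂ μ₃ μ₄ (Q u v \ R) := by
  have key : ∀ (lam : Measure T2), IsFiniteMeasure lam →
      (lam (Q u v)).toReal = (lam R).toReal + (lam (Q u v \ R)).toReal := by
    intro lam hfin
    rw [← ENNReal.toReal_add (measure_ne_top _ _) (measure_ne_top _ _),
      ← measure_union Set.disjoint_sdiff_right ((measurableSet_Q u v).diff measurableSet_R),
      Set.union_diff_cancel (R_subset_Q u v)]
  simp only [cS, key μ₁ ‹_›, key μ₂ ‹_›, key μ₃ ‹_›, key μ₄ ‹_›]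
  push_cast
  ring

lemma tendsto_inv_nat_succ : Tendsto (fun k : ℕ => ((k : ℂ) + 1)⁻¹) atTop (𝓝 0) := by
  have hre : Tendsto (fun k : ℕ => 1 / ((k : ℝ) + 1)) atTop (𝓝 0) :=
    tendsto_one_div_add_atTop_nhds_zero_nat
  have := (Complex.continuous_ofReal.tendsto _).comp hre
  simp only [Function.comp_def, Complex.ofReal_div, Complex.ofReal_one, Complex.ofReal_add,
    Complex.ofReal_natCast, Complex.ofReal_zero, Complex.ofReal_inv, one_div] at this
  exact this

end Stmt8Aux

open Stmt8Aux Filter Topology in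
/-- There are no finite complex Borel measures `μ`, `ν` on the torus `T²` (represented as
`μ = μ₁ - μ₂ + i(μ₃ - μ₄)` and `ν = ν₁ - ν₂ + i(ν₃ - ν₄)` with the `μⱼ`, `νⱼ` finite
nonnegative measures) such that `n·m = n²·μ̂(n,m) + m²·ν̂(n,m)` for all nonnegative
integers `(n,m) ≠ (0,0)`. -/
theorem stmt_8 :
    ¬ ∃ μ₁ μ₂ μ₃ μ₄ ν₁ ν₂ ν₃ ν₄ : Measure T2,
      IsFiniteMeasure μ₁ ∧ IsFiniteMeasure μ₂ ∧ IsFiniteMeasure μ₃ ∧ IsFiniteMeasure μ₄ ∧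
      IsFiniteMeasure ν₁ ∧ IsFiniteMeasure ν₂ ∧ IsFiniteMeasure ν₃ ∧ IsFiniteMeasure ν₄ ∧
      ∀ n m : ℕ, (n, m) ≠ (0, 0) →
        ((n : ℂ) * (m : ℂ)) =
          (n : ℂ) ^ 2 * cFourierCoef μ₁ μ₂ μ₃ μ₄ (n : ℤ) (m : ℤ) +
          (m : ℂ) ^ 2 * cFourierCoef ν₁ ν₂ ν₃ ν₄ (n : ℤ) (m : ℤ) := by
  rintro ⟨μ₁, μ₂, μ₃, μ₄, ν₁, ν₂, ν₃, ν₄, i1, i2, i3, i4, j1, j2, j3, j4, h⟩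
  -- Step 1: the averaged equation along rays
  have key : ∀ p q : ℕ, 0 < p → 0 < q →
      (p : ℂ) ^ 2 * cS μ₁ μ₂ μ₃ μ₄ (L p q) + (q : ℂ) ^ 2 * cS ν₁ ν₂ ν₃ ν₄ (L p q)
        = (p : ℂ) * (q : ℂ) := by
    intro p q hp hq
    have Tμ := avg_tendsto_c μ₁ μ₂ μ₃ μ₄ p q
    have Tν := avg_tendsto_c ν₁ ν₂ ν₃ ν₄ p q
    have Tcomb := (Tμ.const_mul ((p : ℂ) ^ 2)).add (Tν.const_mul ((q : ℂ) ^ 2))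
    have hpq : ∀ k : ℕ,
        (p : ℂ) ^ 2 * cFourierCoef μ₁ μ₂ μ₃ μ₄ (((k + 1) * p : ℕ) : ℤ) (((k + 1) * q : ℕ) : ℤ)
        + (q : ℂ) ^ 2 * cFourierCoef ν₁ ν₂ ν₃ ν₄ (((k + 1) * p : ℕ) : ℤ) (((k + 1) * q : ℕ) : ℤ)
        = (p : ℂ) * (q : ℂ) := by
      intro k
      have hne : ((k + 1) * p, (k + 1) * q) ≠ (0, 0) := by
        intro hcon
        have := congrArg Prod.fst hcon
        simp only [Nat.mul_eq_zero] at this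
        omega
      have hh := h ((k + 1) * p) ((k + 1) * q) hne
      have hk2 : ((k : ℂ) + 1) ^ 2 ≠ 0 := pow_ne_zero _ (Nat.cast_add_one_ne_zero k)
      have hc1 : (((k + 1) * p : ℕ) : ℂ) = ((k : ℂ) + 1) * (p : ℂ) := by push_cast; ring
      have hc2 : (((k + 1) * q : ℕ) : ℂ) = ((k : ℂ) + 1) * (q : ℂ) := by push_cast; ring
      rw [hc1, hc2] at hh
      refine mul_left_cancel₀ hk2 ?_
      linear_combination -hh
    have hconst : Tendsto (fun N : ℕ =>
        (p : ℂ) ^ 2 * ((N : ℂ)⁻¹ * ∑ k ∈ Finset.range N,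
          cFourierCoef μ₁ μ₂ μ₃ μ₄ (((k + 1) * p : ℕ) : ℤ) (((k + 1) * q : ℕ) : ℤ))
        + (q : ℂ) ^ 2 * ((N : ℂ)⁻¹ * ∑ k ∈ Finset.range N,
          cFourierCoef ν₁ ν₂ ν₃ ν₄ (((k + 1) * p : ℕ) : ℤ) (((k + 1) * q : ℕ) : ℤ)))
        atTop (𝓝 ((p : ℂ) * (q : ℂ))) := by
      refine Tendsto.congr' ?_ (tendsto_const_nhds (x := (p : ℂ) * (q : ℂ)))
      filter_upwards [eventually_ge_atTop 1] with N hN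
      have hNne : (N : ℂ) ≠ 0 := Nat.cast_ne_zero.mpr (Nat.one_le_iff_ne_zero.mp hN)
      have hsum : ∑ k ∈ Finset.range N,
          ((p : ℂ) ^ 2 * cFourierCoef μ₁ μ₂ μ₃ μ₄ (((k + 1) * p : ℕ) : ℤ) (((k + 1) * q : ℕ) : ℤ)
          + (q : ℂ) ^ 2 * cFourierCoef ν₁ ν₂ ν₃ ν₄ (((k + 1) * p : ℕ) : ℤ) (((k + 1) * q : ℕ) : ℤ))
          = (N : ℂ) * ((p : ℂ) * (q : ℂ)) := by
        rw [Finset.sum_congr rfl fun k _ => hpq k]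
        simp [mul_comm]
      symm
      calc (p : ℂ) ^ 2 * ((N : ℂ)⁻¹ * ∑ k ∈ Finset.range N,
            cFourierCoef μ₁ μ₂ μ₃ μ₄ (((k + 1) * p : ℕ) : ℤ) (((k + 1) * q : ℕ) : ℤ))
          + (q : ℂ) ^ 2 * ((N : ℂ)⁻¹ * ∑ k ∈ Finset.range N,
            cFourierCoef ν₁ ν₂ ν₃ ν₄ (((k + 1) * p : ℕ) : ℤ) (((k + 1) * q : ℕ) : ℤ))
          = (N : ℂ)⁻¹ * ∑ k ∈ Finset.range N,
            ((p : ℂ) ^ 2 * cFourierCoef μ₁ μ₂ μ₃ μ₄ (((k + 1) * p : ℕ) : ℤ) (((k + 1) * q : ℕ) : ℤ)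
            + (q : ℂ) ^ 2 * cFourierCoef ν₁ ν₂ ν₃ ν₄ (((k + 1) * p : ℕ) : ℤ) (((k + 1) * q : ℕ) : ℤ)) := by
            rw [Finset.sum_add_distrib, ← Finset.mul_sum, ← Finset.mul_sum]
            ring
        _ = (N : ℂ)⁻¹ * ((N : ℂ) * ((p : ℂ) * (q : ℂ))) := by rw [hsum]
        _ = (p : ℂ) * (q : ℂ) := by field_simp
    exact tendsto_nhds_unique Tcomb hconst
  -- Step 2: the equation for the rational sets Q
  have starQ : ∀ u v : ℕ, 0 < u → 0 < v →
      (u : ℂ) ^ 2 * cS μ₁ μ₂ μ₃ μ₄ (Q u v) + (v : ℂ) ^ 2 * cS ν₁ ν₂ ν₃ ν₄ (Q u v)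
        = (u : ℂ) * (v : ℂ) := by
    intro u v hu hv
    have TLμ := cS_tendsto (μ₁ := μ₁) (μ₂ := μ₂) (μ₃ := μ₃) (μ₄ := μ₄)
      (fun J => L (J.factorial * u) (J.factorial * v)) (Q u v)
      (tendsto_L_factorial μ₁ u v) (tendsto_L_factorial μ₂ u v)
      (tendsto_L_factorial μ₃ u v) (tendsto_L_factorial μ₄ u v)
    have TLν := cS_tendsto (μ₁ := ν₁) (μ₂ := ν₂) (μ₃ := ν₃) (μ₄ := ν₄)
      (fun J => L (J.factorial * u) (J.factorial * v)) (Q u v)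
      (tendsto_L_factorial ν₁ u v) (tendsto_L_factorial ν₂ u v)
      (tendsto_L_factorial ν₃ u v) (tendsto_L_factorial ν₄ u v)
    have Tcomb := (TLμ.const_mul ((u : ℂ) ^ 2)).add (TLν.const_mul ((v : ℂ) ^ 2))
    have hJ : ∀ J : ℕ,
        (u : ℂ) ^ 2 * cS μ₁ μ₂ μ₃ μ₄ (L (J.factorial * u) (J.factorial * v))
        + (v : ℂ) ^ 2 * cS ν₁ ν₂ ν₃ ν₄ (L (J.factorial * u) (J.factorial * v))
        = (u : ℂ) * (v : ℂ) := by
      intro J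
      have hk := key (J.factorial * u) (J.factorial * v)
        (Nat.mul_pos J.factorial_pos hu) (Nat.mul_pos J.factorial_pos hv)
      have hf2 : ((J.factorial : ℂ)) ^ 2 ≠ 0 :=
        pow_ne_zero _ (Nat.cast_ne_zero.mpr J.factorial_pos.ne')
      have hc1 : ((J.factorial * u : ℕ) : ℂ) = (J.factorial : ℂ) * (u : ℂ) := by push_cast; ring
      have hc2 : ((J.factorial * v : ℕ) : ℂ) = (J.factorial : ℂ) * (v : ℂ) := by push_cast; ring
      rw [hc1, hc2] at hk
      refine mul_left_cancel₀ hf2 ?_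
      linear_combination hk
    exact tendsto_nhds_unique (Tcomb.congr' (Filter.Eventually.of_forall fun J => (hJ J)))
      (tendsto_const_nhds)
  -- Step 3: the limiting equation along slope t
  set α := cS μ₁ μ₂ μ₃ μ₄ R with hα
  set β := cS ν₁ ν₂ ν₃ ν₄ R with hβ
  have limEq : ∀ t : ℕ, 0 < t → α + (t : ℂ) ^ 2 * β = (t : ℂ) := by
    intro t ht
    set E : ℕ → Set T2 := fun k => Q (k + 1) (t * (k + 1) + 1) \ R with hE
    have hEmeas : ∀ k, MeasurableSet (E k) := fun k =>
      (measurableSet_Q _ _).diff measurableSet_R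
    have hEdisj : Pairwise (Function.onFun Disjoint E) := by
      intro k k' hkk'
      have keyd : ∀ a b : ℕ, a < b →
          Disjoint (E b) (E a) := by
        intro a b hab
        refine Q_disjoint ?_
        have e1 : (a + 1) * (t * (b + 1) + 1) = t * ((a + 1) * (b + 1)) + (a + 1) := by ring
        have e2 : (b + 1) * (t * (a + 1) + 1) = t * ((a + 1) * (b + 1)) + (b + 1) := by ring
        rw [e1, e2]
        omega
      rcases lt_or_gt_of_ne hkk' with hlt | hgt
      · exact (keyd k k' hlt).symm
      · exact keyd k' k hgt
    have eμ0 : Tendsto (fun k => cS μ₁ μ₂ μ₃ μ₄ (E k)) atTop (𝓝 0) :=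
      cS_tendsto_zero E
        (tendsto_measure_disjoint_zero μ₁ E hEmeas hEdisj)
        (tendsto_measure_disjoint_zero μ₂ E hEmeas hEdisj)
        (tendsto_measure_disjoint_zero μ₃ E hEmeas hEdisj)
        (tendsto_measure_disjoint_zero μ₄ E hEmeas hEdisj)
    have eν0 : Tendsto (fun k => cS ν₁ ν₂ ν₃ ν₄ (E k)) atTop (𝓝 0) :=
      cS_tendsto_zero E
        (tendsto_measure_disjoint_zero ν₁ E hEmeas hEdisj)
        (tendsto_measure_disjoint_zero ν₂ E hEmeas hEdisj)
        (tendsto_measure_disjoint_zero ν₃ E hEmeas hEdisj)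
        (tendsto_measure_disjoint_zero ν₄ E hEmeas hEdisj)
    set r : ℕ → ℂ := fun k => (t : ℂ) + ((k : ℂ) + 1)⁻¹ with hr
    have hrt : Tendsto r atTop (𝓝 (t : ℂ)) := by
      have := tendsto_const_nhds (x := (t : ℂ)) (f := atTop (α := ℕ)) |>.add tendsto_inv_nat_succ
      simpa using this
    have hzero : ∀ k : ℕ,
        (α + cS μ₁ μ₂ μ₃ μ₄ (E k)) + (r k) ^ 2 * (β + cS ν₁ ν₂ ν₃ ν₄ (E k)) - r k = 0 := by
      intro k
      have hstar := starQ (k + 1) (t * (k + 1) + 1) k.succ_pos (Nat.succ_pos _)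
      rw [cS_decomp μ₁ μ₂ μ₃ μ₄, cS_decomp ν₁ ν₂ ν₃ ν₄] at hstar
      have hu : ((k : ℂ) + 1) ≠ 0 := Nat.cast_add_one_ne_zero k
      have hv : ((t * (k + 1) + 1 : ℕ) : ℂ) = ((k : ℂ) + 1) * r k := by
        push_cast
        simp only [hr]
        field_simp
      rw [hv] at hstar
      push_cast at hstar
      have hu2 : ((k : ℂ) + 1) ^ 2 ≠ 0 := pow_ne_zero _ hu
      have := mul_left_cancel₀ hu2 (show ((k : ℂ) + 1) ^ 2 *
          ((α + cS μ₁ μ₂ μ₃ μ₄ (E k)) + (r k) ^ 2 * (β + cS ν₁ ν₂ ν₃ ν₄ (E k)))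
          = ((k : ℂ) + 1) ^ 2 * r k from by linear_combination hstar)
      linear_combination this
    have Tfull : Tendsto (fun k =>
        (α + cS μ₁ μ₂ μ₃ μ₄ (E k)) + (r k) ^ 2 * (β + cS ν₁ ν₂ ν₃ ν₄ (E k)) - r k)
        atTop (𝓝 ((α + 0) + (t : ℂ) ^ 2 * (β + 0) - (t : ℂ))) :=
      (((tendsto_const_nhds.add eμ0).add
        ((hrt.pow 2).mul (tendsto_const_nhds.add eν0))).sub hrt)
    have := tendsto_nhds_unique (Tfull.congr' (Filter.Eventually.of_forall fun k => hzero k))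
      tendsto_const_nhds
    rw [add_zero, add_zero] at this
    linear_combination this
  -- Step 4: contradiction
  have e1 := limEq 1 one_pos
  have e2 := limEq 2 two_pos
  have e3 := limEq 3 three_pos
  push_cast at e1 e2 e3
  have hcon : (0 : ℂ) = -2 := by linear_combination 5 * e1 - 8 * e2 + 3 * e3
  norm_num at hcon
end

section
/- Let a₀, a₁, …, a_N be complex numbers, and let p_k, q_k be the Rudin–Shapiro type sequences defined by the recursion p₀(z) = a₀ z^{n₀}, q₀ = 1, p_k(z) = p_{k−1}(z) + a_k z^{n_k} q_{k−1}(z^{−1}), q_k(z) = q_{k−1}(z) − conj(a_k) z^{n_k} p_{k−1}(z^{−1}) for some frequency vectors n_k ∈ ℕ² (the values p_k(1,1) and q_k(1,1) do not depend on the choice of the n_k). Then, with the convention q_{−1} = 1, p_{−1} = 0, there exists a subset A ⊆ {0, 1, …, N} such that |Σ_{k∈A} a_k q_{k−1}(1,1)| + |Σ_{k∈A} conj(a_k) p_{k−1}(1,1)| ≥ (1/(2π)) · Σ_{k=0}^{N} |a_k| · Π_{j=0}^{k−1} (1 + |a_j|²)^{1/2} (empty products equal 1). -/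
open scoped Real ComplexConjugate

private lemma integral_cospos (α : ℝ) :
    ∫ θ in (0:ℝ)..(2*π), max (Real.cos (θ - α)) 0 = 2 := by
  have hint : IntervalIntegrable (fun θ : ℝ => max (Real.cos θ) 0) MeasureTheory.volume
      (π/2) (-(π/2) + 2*π) := (Real.continuous_cos.max continuous_const).intervalIntegrable _ _
  have hint2 : IntervalIntegrable (fun θ : ℝ => max (Real.cos θ) 0) MeasureTheory.volume
      (-(π/2)) (π/2) := (Real.continuous_cos.max continuous_const).intervalIntegrable _ _
  have per : Function.Periodic (fun θ : ℝ => max (Real.cos θ) 0) (2*π) := by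
    intro x; simp [Real.cos_add_two_pi]
  have h1 : (∫ θ in (0:ℝ)..(2*π), max (Real.cos (θ - α)) 0)
      = ∫ θ in (0 - α)..(2*π - α), max (Real.cos θ) 0 :=
    intervalIntegral.integral_comp_sub_right (fun θ => max (Real.cos θ) 0) α
  have h2 : (∫ θ in (0 - α)..(2*π - α), max (Real.cos θ) 0)
      = ∫ θ in (-(π/2))..(-(π/2) + 2*π), max (Real.cos θ) 0 := by
    have := per.intervalIntegral_add_eq (0 - α) (-(π/2))
    rw [show 0 - α + 2*π = 2*π - α by ring] at this
    exact this
  have h3 : (∫ θ in (-(π/2))..(-(π/2) + 2*π), max (Real.cos θ) 0)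
      = (∫ θ in (-(π/2))..(π/2), max (Real.cos θ) 0)
        + ∫ θ in (π/2)..(-(π/2) + 2*π), max (Real.cos θ) 0 :=
    (intervalIntegral.integral_add_adjacent_intervals hint2 hint).symm
  have h4 : (∫ θ in (-(π/2))..(π/2), max (Real.cos θ) 0) = 2 := by
    have hπ := Real.pi_pos
    rw [intervalIntegral.integral_congr (g := fun θ => Real.cos θ)
      (by
        intro x hx
        rw [Set.uIcc_of_le (by linarith)] at hx
        exact max_eq_left (Real.cos_nonneg_of_mem_Icc hx))]
    rw [integral_cos]
    simp
    norm_num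
  have h5 : (∫ θ in (π/2)..(-(π/2) + 2*π), max (Real.cos θ) 0) = 0 := by
    have hπ := Real.pi_pos
    rw [intervalIntegral.integral_congr (g := fun _ => (0:ℝ))
      (by
        intro x hx
        rw [Set.uIcc_of_le (by linarith)] at hx
        exact max_eq_right (Real.cos_nonpos_of_pi_div_two_le_of_le hx.1 (by linarith [hx.2])))]
    simp
  rw [h1, h2, h3, h4, h5]; ring

private lemma re_rot (θ : ℝ) (w : ℂ) :
    (Complex.exp (-(θ:ℂ) * Complex.I) * w).re
      = ‖w‖ * Real.cos (θ - Complex.arg w) := by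
  conv_lhs => rw [← Complex.norm_mul_exp_arg_mul_I w]
  rw [mul_left_comm, ← Complex.exp_add]
  have : -(θ:ℂ) * Complex.I + (Complex.arg w : ℂ) * Complex.I
      = ((Complex.arg w - θ : ℝ) : ℂ) * Complex.I := by push_cast; ring
  rw [this, Complex.re_ofReal_mul, Complex.exp_ofReal_mul_I_re]
  rw [← Real.cos_neg (Complex.arg w - θ)]
  ring_nf

private lemma integral_rot (w : ℂ) :
    ∫ θ in (0:ℝ)..(2*π), max ((Complex.exp (-(θ:ℂ) * Complex.I) * w).re) 0
      = 2 * ‖w‖ := by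
  have h : ∀ θ : ℝ, max ((Complex.exp (-(θ:ℂ) * Complex.I) * w).re) 0
      = ‖w‖ * max (Real.cos (θ - Complex.arg w)) 0 := by
    intro θ
    rw [re_rot, mul_max_of_nonneg _ _ (norm_nonneg w), mul_zero]
  simp_rw [h]
  rw [intervalIntegral.integral_const_mul, integral_cospos]
  ring

private lemma selection (s : Finset ℕ) (w : ℕ → ℂ) :
    ∃ A ⊆ s, (1/π) * ∑ k ∈ s, ‖w k‖ ≤ ‖∑ k ∈ A, w k‖ := by
  have hπ := Real.pi_pos
  set F : ℝ → ℝ := fun θ => ∑ k ∈ s, max ((Complex.exp (-(θ:ℂ) * Complex.I) * w k).re) 0 with hF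
  have hck : ∀ k : ℕ, Continuous fun θ : ℝ => max ((Complex.exp (-(θ:ℂ) * Complex.I) * w k).re) 0 := by
    intro k; fun_prop
  have hcont : Continuous F := by
    apply continuous_finset_sum
    intro k _
    exact hck k
  have hintF : (∫ θ in (0:ℝ)..(2*π), F θ) = 2 * ∑ k ∈ s, ‖w k‖ := by
    rw [hF]
    rw [intervalIntegral.integral_finset_sum (fun k _ =>
      (hck k).intervalIntegrable _ _)]
    rw [Finset.mul_sum]
    exact Finset.sum_congr rfl fun k _ => integral_rot (w k)
  obtain ⟨θ0, hθ0, hmax⟩ := isCompact_Icc.exists_isMaxOn (s := Set.Icc (0:ℝ) (2*π))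
    ⟨0, by constructor <;> positivity⟩ hcont.continuousOn
  have hbound : (∫ θ in (0:ℝ)..(2*π), F θ) ≤ 2*π * F θ0 := by
    have : (∫ θ in (0:ℝ)..(2*π), F θ) ≤ ∫ _ in (0:ℝ)..(2*π), F θ0 := by
      apply intervalIntegral.integral_mono_on (by linarith)
        (hcont.intervalIntegrable _ _) (intervalIntegrable_const)
      intro x hx; exact hmax hx
    simpa using this
  have hsel : (1/π) * ∑ k ∈ s, ‖w k‖ ≤ F θ0 := by
    rw [hintF] at hbound
    rw [div_mul_eq_mul_div, one_mul, div_le_iff₀ hπ]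
    nlinarith
  refine ⟨s.filter (fun k => 0 ≤ (Complex.exp (-(θ0:ℂ) * Complex.I) * w k).re), Finset.filter_subset _ _, ?_⟩
  refine hsel.trans ?_
  have h1 : F θ0 = ∑ k ∈ s.filter (fun k => 0 ≤ (Complex.exp (-(θ0:ℂ) * Complex.I) * w k).re),
      (Complex.exp (-(θ0:ℂ) * Complex.I) * w k).re := by
    rw [Finset.sum_filter, hF]
    apply Finset.sum_congr rfl
    intro k _
    by_cases h : 0 ≤ (Complex.exp (-(θ0:ℂ) * Complex.I) * w k).re
    · rw [if_pos h, max_eq_left h]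
    · rw [if_neg h, max_eq_right (le_of_not_ge h)]
  rw [h1, ← Complex.re_sum, ← Finset.mul_sum]
  refine (Complex.re_le_norm _).trans ?_
  rw [norm_mul]
  have : ‖Complex.exp (-(θ0:ℂ) * Complex.I)‖ = 1 := by
    rw [show -(θ0:ℂ) * Complex.I = ((-θ0 : ℝ) : ℂ) * Complex.I by push_cast; ring]
    exact Complex.norm_exp_ofReal_mul_I _
  rw [this, one_mul]

private lemma normSq_step (x y c : ℂ) :
    Complex.normSq (x + c * y) + Complex.normSq (y - conj c * x)
      = (1 + Complex.normSq c) * (Complex.normSq x + Complex.normSq y) := by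
  simp only [Complex.normSq_apply, Complex.add_re, Complex.add_im, Complex.sub_re,
    Complex.sub_im, Complex.mul_re, Complex.mul_im, Complex.conj_re, Complex.conj_im]
  ring

/-- `shiftedQ Q k = q_{k-1}(1,1)` with the convention `q_{-1} = 1`. -/
def shiftedQ (Q : ℕ → ℂ) : ℕ → ℂ
  | 0 => 1
  | k + 1 => Q k

/-- `shiftedP P k = p_{k-1}(1,1)` with the convention `p_{-1} = 0`. -/
def shiftedP (P : ℕ → ℂ) : ℕ → ℂ
  | 0 => 0
  | k + 1 => P k

/-- If `P k = p_k(1,1)` and `Q k = q_k(1,1)` are the values at `(1,1)` of the Rudin–Shapiro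
type sequences built from scalars `a_k` (these values do not depend on the frequencies), then
there is a subset `A ⊆ {0,…,N}` with
`|∑_{k∈A} a_k q_{k-1}(1,1)| + |∑_{k∈A} conj(a_k) p_{k-1}(1,1)|
  ≥ (1/(2π)) ∑_{k=0}^{N} |a_k| ∏_{j=0}^{k-1} (1+|a_j|²)^{1/2}`
(with the convention `q_{-1} = 1`, `p_{-1} = 0`; empty products equal `1`). -/
theorem stmt_14 (N : ℕ) (a : ℕ → ℂ) (P Q : ℕ → ℂ)
    (hP0 : P 0 = a 0) (hQ0 : Q 0 = 1)
    (hP : ∀ k : ℕ, P (k + 1) = P k + a (k + 1) * Q k)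
    (hQ : ∀ k : ℕ, Q (k + 1) = Q k - conj (a (k + 1)) * P k) :
    ∃ A ⊆ Finset.range (N + 1),
      (1 / (2 * π)) * ∑ k ∈ Finset.range (N + 1),
          ‖a k‖ * ∏ j ∈ Finset.range k, Real.sqrt (1 + ‖a j‖ ^ 2) ≤
        ‖∑ k ∈ A, a k * shiftedQ Q k‖ +
        ‖∑ k ∈ A, conj (a k) * shiftedP P k‖ := by
  have hπ := Real.pi_pos
  -- the Parseval-type identity
  have key : ∀ k : ℕ, Complex.normSq (P k) + Complex.normSq (Q k)
      = ∏ j ∈ Finset.range (k+1), (1 + ‖a j‖ ^ 2) := by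
    intro k
    induction k with
    | zero =>
        simp [hP0, hQ0, Complex.sq_norm, add_comm]
    | succ k ih =>
        rw [hP k, hQ k, normSq_step, ih, Finset.prod_range_succ _ (k+1),
          ← Complex.sq_norm (a (k+1))]
        ring
  have keyS : ∀ k : ℕ,
      Complex.normSq (shiftedP P k) + Complex.normSq (shiftedQ Q k)
        = ∏ j ∈ Finset.range k, (1 + ‖a j‖ ^ 2) := by
    intro k
    match k with
    | 0 => simp [shiftedP, shiftedQ]
    | k + 1 => simpa [shiftedP, shiftedQ] using key k
  -- product of square roots
  have prodsqrt : ∀ k : ℕ,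
      (∏ j ∈ Finset.range k, Real.sqrt (1 + ‖a j‖ ^ 2))
        = Real.sqrt (∏ j ∈ Finset.range k, (1 + ‖a j‖ ^ 2)) := by
    intro k
    induction k with
    | zero => simp
    | succ k ih =>
        rw [Finset.prod_range_succ, Finset.prod_range_succ, ih,
          ← Real.sqrt_mul (Finset.prod_nonneg fun j _ => by positivity)]
  -- the pointwise lower bound
  have hlow : ∀ k : ℕ,
      ‖a k‖ * ∏ j ∈ Finset.range k, Real.sqrt (1 + ‖a j‖ ^ 2)
        ≤ ‖a k * shiftedQ Q k‖ + ‖conj (a k) * shiftedP P k‖ := by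
    intro k
    rw [norm_mul, norm_mul, Complex.norm_conj, ← mul_add]
    apply mul_le_mul_of_nonneg_left _ (norm_nonneg _)
    rw [prodsqrt k, ← keyS k]
    have h1 : Complex.normSq (shiftedP P k) = ‖shiftedP P k‖ ^ 2 :=
      (Complex.sq_norm _).symm
    have h2 : Complex.normSq (shiftedQ Q k) = ‖shiftedQ Q k‖ ^ 2 :=
      (Complex.sq_norm _).symm
    rw [h1, h2]
    set x := ‖shiftedP P k‖
    set y := ‖shiftedQ Q k‖
    have hx : 0 ≤ x := norm_nonneg _
    have hy : 0 ≤ y := norm_nonneg _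
    calc Real.sqrt (x ^ 2 + y ^ 2) ≤ Real.sqrt ((y + x) ^ 2) :=
          Real.sqrt_le_sqrt (by nlinarith)
      _ = y + x := Real.sqrt_sq (by linarith)
  set u : ℕ → ℂ := fun k => a k * shiftedQ Q k with hu
  set v : ℕ → ℂ := fun k => conj (a k) * shiftedP P k with hv
  set s := Finset.range (N + 1)
  have hT : (∑ k ∈ s, ‖a k‖ *
        ∏ j ∈ Finset.range k, Real.sqrt (1 + ‖a j‖ ^ 2))
      ≤ (∑ k ∈ s, ‖u k‖) + ∑ k ∈ s, ‖v k‖ := by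
    rw [← Finset.sum_add_distrib]
    exact Finset.sum_le_sum fun k _ => hlow k
  rcases le_total (∑ k ∈ s, ‖v k‖) (∑ k ∈ s, ‖u k‖) with h | h
  · obtain ⟨A, hA, hle⟩ := selection s u
    refine ⟨A, hA, ?_⟩
    have step : (1 / (2 * π)) * ∑ k ∈ s, ‖a k‖ *
        ∏ j ∈ Finset.range k, Real.sqrt (1 + ‖a j‖ ^ 2)
        ≤ (1 / π) * ∑ k ∈ s, ‖u k‖ := by
      rw [div_mul_eq_mul_div, div_mul_eq_mul_div, one_mul, one_mul,
        div_le_div_iff₀ (by positivity) hπ]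
      nlinarith
    refine (step.trans hle).trans ?_
    exact le_add_of_nonneg_right (norm_nonneg _)
  · obtain ⟨A, hA, hle⟩ := selection s v
    refine ⟨A, hA, ?_⟩
    have step : (1 / (2 * π)) * ∑ k ∈ s, ‖a k‖ *
        ∏ j ∈ Finset.range k, Real.sqrt (1 + ‖a j‖ ^ 2)
        ≤ (1 / π) * ∑ k ∈ s, ‖v k‖ := by
      rw [div_mul_eq_mul_div, div_mul_eq_mul_div, one_mul, one_mul,
        div_le_div_iff₀ (by positivity) hπ]
      nlinarith
    refine (step.trans hle).trans ?_
    exact le_add_of_nonneg_left (norm_nonneg _)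
end
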